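/- Let {Φ_k} be a Markov chain satisfying Φ_{k+1} = Φ_k + Δ(Φ_k) + ε_{k+1} where {ε_k} is a martingale difference sequence and Δ satisfies N(β,Δ) = sup_x (1+|x|^β)|Δ(x)| < ∞ for some β ∈ [0,1). Then for all κ > 0 and integers J < K, almost surely sup_{0≤k≤k+j≤K, 0≤j≤J} |Φ_{k+j} − Φ_k| ≤ 8 M_∞(ε,K) + 2 N(β,Δ) κ^{-β} J + N(β,Δ) + 2κ, where M_∞(ε,n) = sup_{1≤l≤n} |Σ_{k=1}^l ε_k|. -/

import Mathlib

/-- Pathwise fluctuation bound for a skip-free chain: if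
`Φ_{k+1} = Φ_k + Δ(Φ_k) + ε_{k+1}` with `sup_x (1+|x|^β)|Δ(x)| ≤ N`, `β ∈ [0,1)`,
then for all `κ > 0` and integers `J < K`,
`sup_{0≤k≤k+j≤K, j≤J} |Φ_{k+j} − Φ_k| ≤ 8 M_∞(ε,K) + 2 N κ^{-β} J + N + 2κ`,
where `M_∞(ε,n) = sup_{1≤l≤n} |Σ_{k=1}^l ε_k|`. -/
theorem stmt8 (d : ℕ)
    (Φ ε : ℕ → EuclideanSpace ℝ (Fin d))
    (Δ : EuclideanSpace ℝ (Fin d) → EuclideanSpace ℝ (Fin d))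
    (β : ℝ) (hβ0 : 0 ≤ β) (hβ1 : β < 1)
    (N : ℝ) (hN : ∀ x, (1 + ‖x‖ ^ β) * ‖Δ x‖ ≤ N)
    (hrec : ∀ k, Φ (k + 1) = Φ k + Δ (Φ k) + ε (k + 1))
    (κ : ℝ) (hκ : 0 < κ) (J K : ℕ) (hJK : J < K) :
    ∀ k j, j ≤ J → k + j ≤ K →
      ‖Φ (k + j) - Φ k‖ ≤
        8 * ((Finset.Icc 1 K).sup' (Finset.nonempty_Icc.mpr (by omega))
              fun l => ‖∑ i ∈ Finset.Icc 1 l, ε i‖)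
          + 2 * N * κ ^ (-β) * (J : ℝ) + N + 2 * κ := by
  intro k j hjJ hkjK
  have hK1 : 1 ≤ K := by omega
  set M := (Finset.Icc 1 K).sup' (Finset.nonempty_Icc.mpr (by omega : 1 ≤ K))
      (fun l => ‖∑ i ∈ Finset.Icc 1 l, ε i‖) with hMdef
  suffices h : ‖Φ (k + j) - Φ k‖ ≤ 8 * M + 2 * N * κ ^ (-β) * (J : ℝ) + N + 2 * κ by
    exact h
  have hM0 : 0 ≤ M := le_trans (norm_nonneg _)
    (Finset.le_sup' (fun l => ‖∑ i ∈ Finset.Icc 1 l, ε i‖)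
      (Finset.mem_Icc.mpr ⟨le_refl 1, hK1⟩))
  have hN0 : 0 ≤ N :=
    le_trans (mul_nonneg (by positivity) (norm_nonneg _)) (hN 0)
  have hκβ : 0 < κ ^ β := Real.rpow_pos_of_pos hκ β
  have hNκ : 0 ≤ N * κ ^ (-β) := mul_nonneg hN0 (Real.rpow_pos_of_pos hκ _).le
  have hΔN : ∀ x, ‖Δ x‖ ≤ N := by
    intro x
    refine le_trans ?_ (hN x)
    have h1 : (1 : ℝ) ≤ 1 + ‖x‖ ^ β := by
      have := Real.rpow_nonneg (norm_nonneg x) β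
      linarith
    nlinarith [norm_nonneg (Δ x)]
  have hΔκ : ∀ x : EuclideanSpace ℝ (Fin d), κ ≤ ‖x‖ → ‖Δ x‖ ≤ N * κ ^ (-β) := by
    intro x hx
    rw [Real.rpow_neg hκ.le, ← div_eq_mul_inv, le_div_iff₀ hκβ]
    have h1 : κ ^ β ≤ 1 + ‖x‖ ^ β := by
      have h2 : κ ^ β ≤ ‖x‖ ^ β := Real.rpow_le_rpow hκ.le hx hβ0
      linarith
    nlinarith [norm_nonneg (Δ x), hN x]
  -- telescoping identity
  have htel : ∀ a b : ℕ, a ≤ b →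
      Φ b - Φ a = (∑ i ∈ Finset.Ico a b, Δ (Φ i)) + ∑ i ∈ Finset.Ioc a b, ε i := by
    intro a b hab
    induction b, hab using Nat.le_induction with
    | base => simp
    | succ b hab ih =>
      rw [Finset.sum_Ico_succ_top hab, Finset.sum_Ioc_succ_top hab]
      calc Φ (b + 1) - Φ a = (Φ b - Φ a) + (Δ (Φ b) + ε (b + 1)) := by
            rw [hrec b]; abel
        _ = _ := by rw [ih]; abel
  -- martingale increment bound
  have hε : ∀ a b : ℕ, a ≤ b → b ≤ K → ‖∑ i ∈ Finset.Ioc a b, ε i‖ ≤ 2 * M := by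
    have hpre : ∀ c : ℕ, c ≤ K → ‖∑ i ∈ Finset.Ioc 0 c, ε i‖ ≤ M := by
      intro c hc
      rcases Nat.eq_zero_or_pos c with h | h
      · subst h; simpa using hM0
      · have hset : Finset.Ioc 0 c = Finset.Icc 1 c := (Finset.Icc_add_one_left_eq_Ioc 0 c).symm
        rw [hset]
        exact Finset.le_sup' (fun l => ‖∑ i ∈ Finset.Icc 1 l, ε i‖)
          (Finset.mem_Icc.mpr ⟨h, hc⟩)
    intro a b hab hbK
    have hsplit : ∑ i ∈ Finset.Ioc 0 a, ε i + ∑ i ∈ Finset.Ioc a b, ε i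
        = ∑ i ∈ Finset.Ioc 0 b, ε i :=
      Finset.sum_Ioc_consecutive _ (Nat.zero_le a) hab
    have heq : ∑ i ∈ Finset.Ioc a b, ε i
        = ∑ i ∈ Finset.Ioc 0 b, ε i - ∑ i ∈ Finset.Ioc 0 a, ε i := by
      rw [← hsplit]; abel
    rw [heq]
    calc ‖∑ i ∈ Finset.Ioc 0 b, ε i - ∑ i ∈ Finset.Ioc 0 a, ε i‖
        ≤ ‖∑ i ∈ Finset.Ioc 0 b, ε i‖ + ‖∑ i ∈ Finset.Ioc 0 a, ε i‖ := norm_sub_le _ _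
      _ ≤ M + M := add_le_add (hpre b hbK) (hpre a (le_trans hab hbK))
      _ = 2 * M := by ring
  -- segment bound outside the ball
  have hseg : ∀ a b : ℕ, a ≤ b → b ≤ K → (∀ i ∈ Finset.Ico a b, κ ≤ ‖Φ i‖) →
      ‖Φ b - Φ a‖ ≤ ((b - a : ℕ) : ℝ) * (N * κ ^ (-β)) + 2 * M := by
    intro a b hab hbK hout
    rw [htel a b hab]
    calc ‖(∑ i ∈ Finset.Ico a b, Δ (Φ i)) + ∑ i ∈ Finset.Ioc a b, ε i‖
        ≤ ‖∑ i ∈ Finset.Ico a b, Δ (Φ i)‖ + ‖∑ i ∈ Finset.Ioc a b, ε i‖ :=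
          norm_add_le _ _
      _ ≤ (∑ i ∈ Finset.Ico a b, ‖Δ (Φ i)‖) + 2 * M :=
          add_le_add (norm_sum_le _ _) (hε a b hab hbK)
      _ ≤ (∑ _i ∈ Finset.Ico a b, (N * κ ^ (-β))) + 2 * M := by
          gcongr with i hi
          exact hΔκ _ (hout i hi)
      _ = ((b - a : ℕ) : ℝ) * (N * κ ^ (-β)) + 2 * M := by
          rw [Finset.sum_const, Nat.card_Ico, nsmul_eq_mul]
  by_cases hcase : ∃ i ∈ Finset.Icc k (k + j), ‖Φ i‖ < κ
  · obtain ⟨i0, hi0, hi0κ⟩ := hcase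
    set S := (Finset.Icc k (k + j)).filter (fun i => ‖Φ i‖ < κ) with hSdef
    have hSne : S.Nonempty := ⟨i0, Finset.mem_filter.mpr ⟨hi0, hi0κ⟩⟩
    set σ := S.min' hSne with hσdef
    set τ := S.max' hSne with hτdef
    have hσS := S.min'_mem hSne
    have hτS := S.max'_mem hSne
    rw [Finset.mem_filter, Finset.mem_Icc] at hσS hτS
    have hστ : σ ≤ τ := S.min'_le _ (S.max'_mem hSne)
    have hlo : ∀ i ∈ Finset.Ico k σ, κ ≤ ‖Φ i‖ := by
      intro i hi
      rw [Finset.mem_Ico] at hi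
      by_contra hcon
      push_neg at hcon
      have hiS : i ∈ S := Finset.mem_filter.mpr
        ⟨Finset.mem_Icc.mpr ⟨hi.1, by omega⟩, hcon⟩
      have := S.min'_le i hiS
      omega
    have hhi : ∀ i ∈ Finset.Ico (τ + 1) (k + j), κ ≤ ‖Φ i‖ := by
      intro i hi
      rw [Finset.mem_Ico] at hi
      by_contra hcon
      push_neg at hcon
      have hiS : i ∈ S := Finset.mem_filter.mpr
        ⟨Finset.mem_Icc.mpr ⟨by omega, by omega⟩, hcon⟩
      have := S.le_max' i hiS
      omega
    have h1 := hseg k σ hσS.1.1 (by omega) hlo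
    have hc1 : ((σ - k : ℕ) : ℝ) ≤ (J : ℝ) := by
      have : σ - k ≤ J := by omega
      exact_mod_cast this
    have h2 : ‖Φ τ - Φ σ‖ ≤ 2 * κ := by
      calc ‖Φ τ - Φ σ‖ ≤ ‖Φ τ‖ + ‖Φ σ‖ := norm_sub_le _ _
        _ ≤ 2 * κ := by
            have := hσS.2; have := hτS.2; linarith
    by_cases hτe : τ = k + j
    · have hd : Φ (k + j) - Φ k = (Φ τ - Φ σ) + (Φ σ - Φ k) := by rw [hτe]; abel
      rw [hd]
      have hb := norm_add_le (Φ τ - Φ σ) (Φ σ - Φ k)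
      linarith [hb, h1, h2, mul_le_mul_of_nonneg_right hc1 hNκ, hM0, hN0, hκ.le,
        mul_nonneg (Nat.cast_nonneg J : (0:ℝ) ≤ J) hNκ]
    · have hτlt : τ + 1 ≤ k + j := by omega
      have h4 := hseg (τ + 1) (k + j) hτlt hkjK hhi
      have hc4 : ((k + j - (τ + 1) : ℕ) : ℝ) ≤ (J : ℝ) := by
        have : k + j - (τ + 1) ≤ J := by omega
        exact_mod_cast this
      have h3 : ‖Φ (τ + 1) - Φ τ‖ ≤ N + 2 * M := by
        have heq : Φ (τ + 1) - Φ τ = Δ (Φ τ) + ε (τ + 1) := by rw [hrec τ]; abel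
        rw [heq]
        have hε1 : ‖ε (τ + 1)‖ ≤ 2 * M := by
          have := hε τ (τ + 1) (Nat.le_succ τ) (by omega)
          simpa using this
        calc ‖Δ (Φ τ) + ε (τ + 1)‖ ≤ ‖Δ (Φ τ)‖ + ‖ε (τ + 1)‖ := norm_add_le _ _
          _ ≤ N + 2 * M := add_le_add (hΔN _) hε1
      have hd : Φ (k + j) - Φ k
          = ((Φ (k + j) - Φ (τ + 1)) + (Φ (τ + 1) - Φ τ)) + ((Φ τ - Φ σ) + (Φ σ - Φ k)) := by
        abel
      rw [hd]
      have hb1 := norm_add_le ((Φ (k + j) - Φ (τ + 1)) + (Φ (τ + 1) - Φ τ))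
        ((Φ τ - Φ σ) + (Φ σ - Φ k))
      have hb2 := norm_add_le (Φ (k + j) - Φ (τ + 1)) (Φ (τ + 1) - Φ τ)
      have hb3 := norm_add_le (Φ τ - Φ σ) (Φ σ - Φ k)
      linarith [hb1, hb2, hb3, h1, h2, h3, h4,
        mul_le_mul_of_nonneg_right hc1 hNκ, mul_le_mul_of_nonneg_right hc4 hNκ,
        hM0, hN0, hκ.le]
  · push_neg at hcase
    have hout : ∀ i ∈ Finset.Ico k (k + j), κ ≤ ‖Φ i‖ := fun i hi => by
      have hi' := Finset.mem_Ico.mp hi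
      exact hcase i (Finset.mem_Icc.mpr ⟨hi'.1, by omega⟩)
    have hb := hseg k (k + j) (Nat.le_add_right _ _) hkjK hout
    have hcj : ((k + j - k : ℕ) : ℝ) ≤ (J : ℝ) := by
      have : k + j - k ≤ J := by omega
      exact_mod_cast this
    linarith [hb, mul_le_mul_of_nonneg_right hcj hNκ, hM0, hN0, hκ.le,
      mul_nonneg (Nat.cast_nonneg J : (0:ℝ) ≤ J) hNκ]
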